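/- Let n ≥ 1 and define P : ℝ → ℝ^{4n} → ℝ³ → ℂ by P t x z := ∫_{τ ∈ ℝ³} exp( -( i·⟨τ, z⟩ + (1/2)·‖τ‖·(cosh ‖τ‖ / sinh ‖τ‖)·‖x‖² ) / t ) · ( ‖τ‖ / sinh ‖τ‖ )^{2n} dτ. Then for every s with 0 < s < 1, all α, β ∈ {1,…,4n} and every i ∈ {1,2,3}: ∫_{(x,z) ∈ ℝ^{4n} × ℝ³} P (1-s) x z · x_α · x_β · (∂_{z_i} P) s x z d(x,z) = 0, where ∂_{z_i}P s x z denotes the Fréchet derivative of the map z ↦ P s x z at z applied to the i-th standard basis vector of ℝ³, x_α is the α-th coordinate of x, and the integral is over ℝ^{4n} × ℝ³ with Lebesgue measure. -/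

import Mathlib

open RealInnerProductSpace MeasureTheory

/-- The Beals–Gaveau–Greiner heat kernel (unnormalized) of the intrinsic sublaplacian on
the quaternionic Heisenberg group. -/
noncomputable def bggKernel (n : ℕ) (t : ℝ) (x : EuclideanSpace ℝ (Fin (4 * n)))
    (z : EuclideanSpace ℝ (Fin 3)) : ℂ :=
  ∫ τ : EuclideanSpace ℝ (Fin 3),
    Complex.exp (-((Complex.I * ((⟪τ, z⟫ : ℝ) : ℂ) +
        (((1 / 2 : ℝ) * ‖τ‖ * (Real.cosh ‖τ‖ / Real.sinh ‖τ‖) * ‖x‖ ^ 2 : ℝ) : ℂ)) /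
        (t : ℂ))) *
      (((‖τ‖ / Real.sinh ‖τ‖ : ℝ) : ℂ)) ^ (2 * n)

lemma bggKernel_even (n : ℕ) (t : ℝ) (x : EuclideanSpace ℝ (Fin (4 * n)))
    (z : EuclideanSpace ℝ (Fin 3)) : bggKernel n t x (-z) = bggKernel n t x z := by
  unfold bggKernel
  rw [← MeasureTheory.integral_neg_eq_self
    (fun τ : EuclideanSpace ℝ (Fin 3) =>
      Complex.exp (-((Complex.I * ((⟪τ, z⟫ : ℝ) : ℂ) +
        (((1 / 2 : ℝ) * ‖τ‖ * (Real.cosh ‖τ‖ / Real.sinh ‖τ‖) * ‖x‖ ^ 2 : ℝ) : ℂ)) /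
        (t : ℂ))) *
      (((‖τ‖ / Real.sinh ‖τ‖ : ℝ) : ℂ)) ^ (2 * n))]
  congr 1
  funext τ
  simp [inner_neg_left, inner_neg_right]

lemma fderiv_of_even {E F : Type*} [NormedAddCommGroup E] [NormedSpace ℝ E]
    [NormedAddCommGroup F] [NormedSpace ℝ F] {g : E → F} (hg : ∀ z, g (-z) = g z)
    (z v : E) : fderiv ℝ g (-z) v = - fderiv ℝ g z v := by
  have hcomp : g ∘ Neg.neg = g := funext fun w => hg w
  have hdiff : ∀ w : E, DifferentiableAt ℝ g w → DifferentiableAt ℝ g (-w) := by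
    intro w hw
    have h1 : DifferentiableAt ℝ (g ∘ Neg.neg) (-w) := by
      apply DifferentiableAt.comp
      · simpa using hw
      · exact (hasFDerivAt_id (-w : E)).neg.differentiableAt
    rwa [hcomp] at h1
  by_cases h : DifferentiableAt ℝ g z
  · have hd : HasFDerivAt g (fderiv ℝ g z) z := h.hasFDerivAt
    have hneg : HasFDerivAt (fun w : E => -w) (-(ContinuousLinearMap.id ℝ E)) (-z) := by
      exact (hasFDerivAt_id (-z : E)).neg
    have h2 : HasFDerivAt (g ∘ Neg.neg)
        ((fderiv ℝ g z).comp (-(ContinuousLinearMap.id ℝ E))) (-z) := by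
      apply HasFDerivAt.comp
      · simpa using hd
      · exact hneg
    rw [hcomp] at h2
    rw [h2.fderiv]
    simp
  · have h2 : ¬ DifferentiableAt ℝ g (-z) := by
      intro h2; exact h (by simpa using hdiff _ h2)
    rw [fderiv_zero_of_not_differentiableAt h, fderiv_zero_of_not_differentiableAt h2]
    simp

/-- Formula (1) in the proof of Theorem 5.7: the convolution moment integral
`∫ P(1-s, x, z) · x_α x_β · ∂_{z_i} P(s, x, z) d(x, z)` vanishes. -/
theorem integral_xx_dz_bggKernel_eq_zero
    (n : ℕ) (hn : 1 ≤ n) (s : ℝ) (hs0 : 0 < s) (hs1 : s < 1)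
    (α β : Fin (4 * n)) (i : Fin 3) :
    ∫ p : EuclideanSpace ℝ (Fin (4 * n)) × EuclideanSpace ℝ (Fin 3),
      bggKernel n (1 - s) p.1 p.2 * (p.1 α : ℂ) * (p.1 β : ℂ) *
        fderiv ℝ (fun z => bggKernel n s p.1 z) p.2 (EuclideanSpace.single i 1)
      = 0 := by
  set F : EuclideanSpace ℝ (Fin (4 * n)) × EuclideanSpace ℝ (Fin 3) → ℂ := fun p =>
    bggKernel n (1 - s) p.1 p.2 * (p.1 α : ℂ) * (p.1 β : ℂ) *
      fderiv ℝ (fun z => bggKernel n s p.1 z) p.2 (EuclideanSpace.single i 1) with hF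
  have mp : MeasurePreserving
      (fun p : EuclideanSpace ℝ (Fin (4 * n)) × EuclideanSpace ℝ (Fin 3) =>
        (p.1, -p.2)) volume volume :=
    (MeasurePreserving.id volume).prod (Measure.measurePreserving_neg volume)
  have me : MeasurableEmbedding
      (fun p : EuclideanSpace ℝ (Fin (4 * n)) × EuclideanSpace ℝ (Fin 3) =>
        (p.1, -p.2)) :=
    ((MeasurableEquiv.refl (EuclideanSpace ℝ (Fin (4 * n)))).prodCongr
      (MeasurableEquiv.neg (EuclideanSpace ℝ (Fin 3)))).measurableEmbedding
  have key : (∫ p : EuclideanSpace ℝ (Fin (4 * n)) × EuclideanSpace ℝ (Fin 3),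
      F (p.1, -p.2)) = ∫ p, F p := mp.integral_comp me F
  have hodd : ∀ p : EuclideanSpace ℝ (Fin (4 * n)) × EuclideanSpace ℝ (Fin 3),
      F (p.1, -p.2) = -F p := by
    intro p
    simp only [hF]
    rw [bggKernel_even, fderiv_of_even (fun z => bggKernel_even n s p.1 z)]
    ring
  have : ∫ p, F p = - ∫ p, F p := by
    conv_lhs => rw [← key]
    simp_rw [hodd]
    exact integral_neg F
  linear_combination this / 2
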